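/- arXiv:2306.17478 — 2 statements merged into one kernel-verified Lean document; each statement's English description precedes it below -/
import Mathlib

section
/- Let π₊, π₋ be real numbers with π₊ > 0, π₋ > 0 and π₊ + π₋ = 1, let μ₊, μ₋ ∈ ℝ, and let σ₊², σ₋² ∈ ℝ. Define V(m) = (σ₊² + (μ₊ − m)²)/π₊ + (σ₋² + (μ₋ − m)²)/π₋ − (μ₊ − μ₋)² for m ∈ ℝ. Then V attains its minimum over ℝ at the unique point m* = π₋·μ₊ + π₊·μ₋ (the CFACE); i.e., V(m) > V(m*) for all m ≠ m*. -/
/-- Theorem 2 of the paper: the conditional variance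
`V(m) = (σp2 + (μp − m)²)/πp + (σn2 + (μn − m)²)/πn − (μp − μn)²`
of the transformed outcome attains its minimum over `ℝ` at the unique
point `m* = πn·μp + πp·μn` (the CFACE); i.e. `V(m) > V(m*)` for `m ≠ m*`. -/
theorem cface_minimizes_variance
    (πp πn μp μn σp2 σn2 : ℝ)
    (hπp : 0 < πp) (hπn : 0 < πn) (hsum : πp + πn = 1)
    (V : ℝ → ℝ)
    (hV : ∀ m, V m = (σp2 + (μp - m) ^ 2) / πp + (σn2 + (μn - m) ^ 2) / πn
        - (μp - μn) ^ 2) :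
    (∀ m : ℝ, V (πn * μp + πp * μn) ≤ V m) ∧
    (∀ m : ℝ, m ≠ πn * μp + πp * μn → V (πn * μp + πp * μn) < V m) := by
  have key : ∀ m : ℝ, V m - V (πn * μp + πp * μn)
      = (m - (πn * μp + πp * μn)) ^ 2 * (1 / πp + 1 / πn) := by
    intro m
    have hn : πn = 1 - πp := by linarith
    subst hn
    rw [hV, hV]
    field_simp
    ring
  have hpos : 0 < 1 / πp + 1 / πn := by positivity
  constructor
  · intro m
    nlinarith [key m, sq_nonneg (m - (πn * μp + πp * μn))]
  · intro m hm
    have : 0 < (m - (πn * μp + πp * μn)) ^ 2 := by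
      have := sub_ne_zero.mpr hm; positivity
    nlinarith [key m]
end

section
/- Let p, n be positive natural numbers. Let π₊, π₋ be real numbers with π₊ ≠ 0, π₋ ≠ 0 and π₊ + π₋ = 1 (write π_{+1} = π₊, π_{−1} = π₋, and π_{−a} for the opposite arm's probability). Let x₁, …, x_n ∈ ℝ^p, y₁, …, y_n ∈ ℝ, a₁, …, a_n ∈ {−1, +1}, and v_{+1}, v_{−1} ∈ ℝ^p. Then Σ_{i=1}^{n} [ (aᵢ/π_{aᵢ})·(yᵢ − Σ_{a ∈ {−1,+1}} π_{−a}·⟨v_a, xᵢ⟩) − Σ_{a ∈ {−1,+1}} a·⟨v_a, xᵢ⟩ ]² = Σ_{a ∈ {−1,+1}} Σ_{i : aᵢ = a} [ (a/π_a)·yᵢ − (a/π_a)·⟨v_a, xᵢ⟩ ]², where ⟨·,·⟩ is the Euclidean inner product on ℝ^p. -/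
open Matrix Finset

/-- Separability of the combined CATE-estimation objective (Appendix):
with `πp, πn ≠ 0`, `πp + πn = 1`, arm probabilities `π 1 = πp`,
`π (−1) = πn` (so `π (−t)` is the opposite arm's probability), arm
coefficient vectors `v 1 = vp`, `v (−1) = vn`, samples
`(xᵢ, yᵢ, aᵢ)` with `aᵢ ∈ {−1, +1}`, the squared-error objective
`Σᵢ [ (aᵢ/π(aᵢ))·(yᵢ − Σ_t π(−t)·⟨v t, xᵢ⟩) − Σ_t t·⟨v t, xᵢ⟩ ]²`
equals the sum over arms `t ∈ {−1, +1}` of the per-arm inverse-probability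
weighted objective `Σ_{i : aᵢ = t} [ (t/π t)·yᵢ − (t/π t)·⟨v t, xᵢ⟩ ]²`. -/
theorem objective_separates_over_arms
    (p n : ℕ) (hp : 0 < p) (hn : 0 < n)
    (πp πn : ℝ) (hπp : πp ≠ 0) (hπn : πn ≠ 0) (hsum : πp + πn = 1)
    (π : ℝ → ℝ) (hπ1 : π 1 = πp) (hπm1 : π (-1) = πn)
    (x : Fin n → Fin p → ℝ) (y : Fin n → ℝ)
    (a : Fin n → ℝ) (ha : ∀ i, a i = 1 ∨ a i = -1)
    (vp vn : Fin p → ℝ)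
    (v : ℝ → Fin p → ℝ) (hv1 : v 1 = vp) (hvm1 : v (-1) = vn) :
    ∑ i, ((a i / π (a i)) *
            (y i - ∑ t ∈ ({-1, 1} : Finset ℝ), π (-t) * (v t ⬝ᵥ x i))
          - ∑ t ∈ ({-1, 1} : Finset ℝ), t * (v t ⬝ᵥ x i)) ^ 2
      = ∑ t ∈ ({-1, 1} : Finset ℝ),
          ∑ i ∈ Finset.univ.filter (fun i => a i = t),
            ((t / π t) * y i - (t / π t) * (v t ⬝ᵥ x i)) ^ 2 := by
  have key : ∀ t ∈ ({-1, 1} : Finset ℝ),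
      ∑ i ∈ Finset.univ.filter (fun i => a i = t),
        ((t / π t) * y i - (t / π t) * (v t ⬝ᵥ x i)) ^ 2
      = ∑ i ∈ Finset.univ.filter (fun i => a i = t),
        ((a i / π (a i)) * y i - (a i / π (a i)) * (v (a i) ⬝ᵥ x i)) ^ 2 := by
    intro t _
    refine Finset.sum_congr rfl ?_
    intro i hi
    simp only [Finset.mem_filter] at hi
    rw [hi.2]
  rw [Finset.sum_congr rfl key,
    Finset.sum_fiberwise_of_maps_to (fun i _ => by
      rcases ha i with h | h <;> simp [h])]
  refine Finset.sum_congr rfl ?_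
  intro i _
  have hs : ({-1, 1} : Finset ℝ) = {-1, 1} := rfl
  rcases ha i with h | h <;>
  · rw [h]
    simp only [Finset.sum_insert (by norm_num : (-1:ℝ) ∉ ({1} : Finset ℝ)),
      Finset.sum_singleton, neg_neg, hπ1, hπm1, hv1, hvm1]
    have hpn : πn = 1 - πp := by linarith
    subst hpn
    field_simp
    ring
end
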